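/- arXiv:2403.07753 — 2 statements merged into one kernel-verified Lean document; each statement's English description precedes it below -/
import Mathlib

section
/- Suppose for some index j in the same class as i (y_i = y_j) the margin constraint y_j(w·x_j + b) ≥ 1 − ξ_j holds with 0 ≤ ξ_j ≤ 2. Then 1 − y_i(w·x_i + b) ≤ 2 + ‖x_i − x_j‖_q · ‖w‖_p, where 1/p + 1/q = 1. -/
open Finset

/-- If a same-class point j satisfies its margin constraint with 0 ≤ ξ_j ≤ 2, then
1 − y_i(w·x_i + b) ≤ 2 + ‖x_i − x_j‖_q · ‖w‖_p. -/
theorem bigM_core_estimate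
    (d : ℕ) (p q : ℝ) (hpq : Real.HolderConjugate p q)
    (w xi xj : Fin d → ℝ) (b : ℝ) (yi yj ξj : ℝ)
    (hyi : yi = -1 ∨ yi = 1) (hyj : yj = -1 ∨ yj = 1) (hclass : yi = yj)
    (hmargin : yj * (∑ k, w k * xj k + b) ≥ 1 - ξj)
    (hξ0 : 0 ≤ ξj) (hξ2 : ξj ≤ 2) :
    1 - yi * (∑ k, w k * xi k + b) ≤
      2 + (∑ k, |xi k - xj k| ^ q) ^ (1 / q) * (∑ k, |w k| ^ p) ^ (1 / p) := by
  subst hclass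
  have habs : |yi| = 1 := by rcases hyi with h | h <;> simp [h]
  have hH := Real.inner_le_Lp_mul_Lq (Finset.univ : Finset (Fin d))
    (fun k => yi * (xj k - xi k)) w hpq.symm
  have habs2 : ∀ k, |yi * (xj k - xi k)| = |xi k - xj k| := by
    intro k
    rw [abs_mul, habs, one_mul, abs_sub_comm]
  simp only [habs2] at hH
  have key : yi * (∑ k, w k * xj k) - yi * (∑ k, w k * xi k)
      = ∑ k, yi * (xj k - xi k) * w k := by
    rw [← mul_sub, ← Finset.sum_sub_distrib]
    rw [Finset.mul_sum]
    congr 1; ext k; ring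
  nlinarith [hH, key, hmargin]
end

section
/- Let t ∈ ℝ and M ≥ 1 − t. Then the optimal value of min{ξ + 2z : ξ ∈ [0,2], z ∈ {0,1}, t ≥ 1 − ξ − M z, ξ ≤ 2(1 − z)} equals the ramp loss min(2, max(0, 1 − t)). -/
/-- If M ≥ 1 − t, the big-M formulation with the strengthening ξ ≤ 2(1 − z) has
optimal value equal to the ramp loss min(2, max(0, 1 − t)). -/
theorem ramp_loss_bigM_exact (t M : ℝ) (hM : M ≥ 1 - t) :
    IsLeast {val : ℝ | ∃ ξ z : ℝ, 0 ≤ ξ ∧ ξ ≤ 2 ∧ (z = 0 ∨ z = 1) ∧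
        t ≥ 1 - ξ - M * z ∧ ξ ≤ 2 * (1 - z) ∧ val = ξ + 2 * z}
      (min 2 (max 0 (1 - t))) := by
  constructor
  · rcases le_or_gt (1 - t) 0 with h | h
    · exact ⟨0, 0, le_refl 0, by norm_num, Or.inl rfl, by linarith, by norm_num,
        by rw [max_eq_left h, min_eq_right] <;> norm_num⟩
    · rcases le_or_gt (1 - t) 2 with h2 | h2
      · exact ⟨1 - t, 0, h.le, h2, Or.inl rfl, by linarith, by linarith,
          by rw [max_eq_right h.le, min_eq_right h2]; ring⟩
      · exact ⟨0, 1, le_refl 0, by norm_num, Or.inr rfl, by linarith, by norm_num,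
          by rw [max_eq_right (by linarith : (0:ℝ) ≤ 1 - t), min_eq_left (by linarith)]; norm_num⟩
  · rintro v ⟨ξ, z, h0, h2, hz, ht, hs, rfl⟩
    rcases hz with rfl | rfl
    · calc min 2 (max 0 (1 - t)) ≤ max 0 (1 - t) := min_le_right _ _
        _ ≤ ξ + 2 * 0 := by
          apply max_le <;> linarith
    · have : ξ = 0 := le_antisymm (by linarith) h0
      subst this
      calc min 2 (max 0 (1 - t)) ≤ 2 := min_le_left _ _
        _ = 0 + 2 * 1 := by norm_num
end
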